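/- Let 𝒜 be an abelian length category, 𝒰 ⊆ 𝒯 torsion classes in 𝒜, and 𝒲 := 𝒰^⊥ ∩ 𝒯. Then every object T ∈ 𝒯 fits into a short exact sequence 0 → U → T → W → 0 with U ∈ 𝒰 and W ∈ 𝒲, unique up to isomorphism of short exact sequences; consequently 𝒯 = 𝒰 * 𝒲. -/

import Mathlib

open CategoryTheory CategoryTheory.Limits

universe v u

attribute [local instance] CategoryTheory.Abelian.hasFiniteBiproducts

variable (C : Type u) [Category.{v} C] [Abelian C]

/-- The right Hom-perpendicular category of a class of objects. -/
def RPerp (X : Set C) : Set C := {Y | ∀ A ∈ X, ∀ f : A ⟶ Y, f = 0}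

/-- The left Hom-perpendicular category of a class of objects. -/
def LPerp (X : Set C) : Set C := {Y | ∀ A ∈ X, ∀ f : Y ⟶ A, f = 0}

/-- A torsion class: a class of objects containing the zero objects and closed under
quotients and extensions. -/
structure IsTorsionClass (T : Set C) : Prop where
  zero_mem : ∀ Z : C, IsZero Z → Z ∈ T
  quot_mem : ∀ ⦃A B : C⦄ (f : A ⟶ B), Epi f → A ∈ T → B ∈ T
  ext_mem : ∀ E : ShortComplex C, E.ShortExact → E.X₁ ∈ T → E.X₃ ∈ T → E.X₂ ∈ T

/-- A torsion-free class: a class of objects containing the zero objects and closed under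
subobjects and extensions. -/
structure IsTorsionFreeClass (F : Set C) : Prop where
  zero_mem : ∀ Z : C, IsZero Z → Z ∈ F
  sub_mem : ∀ ⦃A B : C⦄ (f : A ⟶ B), Mono f → B ∈ F → A ∈ F
  ext_mem : ∀ E : ShortComplex C, E.ShortExact → E.X₁ ∈ F → E.X₃ ∈ F → E.X₂ ∈ F

/-- The smallest torsion class containing a class of objects. -/
def torsClosure (X : Set C) : Set C := ⋂₀ {T | IsTorsionClass C T ∧ X ⊆ T}

/-- The smallest torsion-free class containing a class of objects. -/
def torfClosure (X : Set C) : Set C := ⋂₀ {F | IsTorsionFreeClass C F ∧ X ⊆ F}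

/-- `ExtStar U W` is the class of objects `X` admitting a short exact sequence
`0 → U' → X → W' → 0` with `U' ∈ U` and `W' ∈ W`. -/
def ExtStar (U W : Set C) : Set C :=
  {X | ∃ E : ShortComplex C, E.ShortExact ∧ E.X₁ ∈ U ∧ E.X₃ ∈ W ∧ Nonempty (E.X₂ ≅ X)}

/-- The additive closure of a class of objects: direct summands of finite direct sums. -/
def AddClosure (S : Set C) : Set C :=
  {X | ∃ (n : ℕ) (c : Fin n → C), (∀ i, c i ∈ S) ∧ ∃ f : (⨁ c) ⟶ X, IsSplitEpi f}

/-- Membership in the filtration closure `Filt S`: objects admitting a finite filtration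
with subquotients in `AddClosure S`. -/
inductive FiltMem (S : Set C) : C → Prop
  | of_isZero (X : C) : IsZero X → FiltMem S X
  | ext (E : ShortComplex C) : E.ShortExact → FiltMem S E.X₁ →
      E.X₃ ∈ AddClosure C S → FiltMem S E.X₂
  | of_iso (X Y : C) (e : X ≅ Y) : FiltMem S X → FiltMem S Y

/-- The filtration closure of a class of objects. -/
def Filt (S : Set C) : Set C := {X | FiltMem C S X}

/-- The class of quotients of objects of the additive closure of `S`. -/
def Fac (S : Set C) : Set C := {X | ∃ A ∈ AddClosure C S, ∃ f : A ⟶ X, Epi f}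

/-- The class of subobjects of objects of the additive closure of `S`. -/
def Subm (S : Set C) : Set C := {X | ∃ A ∈ AddClosure C S, ∃ f : X ⟶ A, Mono f}

/-- A wide subcategory: closed under kernels, cokernels and extensions
(and containing the zero objects). -/
structure IsWide (W : Set C) : Prop where
  zero_mem : ∀ Z : C, IsZero Z → Z ∈ W
  ker_mem : ∀ ⦃X Y : C⦄ (f : X ⟶ Y), X ∈ W → Y ∈ W → kernel f ∈ W
  coker_mem : ∀ ⦃X Y : C⦄ (f : X ⟶ Y), X ∈ W → Y ∈ W → cokernel f ∈ W
  ext_mem : ∀ E : ShortComplex C, E.ShortExact → E.X₁ ∈ W → E.X₃ ∈ W → E.X₂ ∈ W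

/-- A brick: a nonzero object all of whose nonzero endomorphisms are invertible
(equivalently, the endomorphism ring is a division ring). -/
def IsBrick (S : C) : Prop := ¬ IsZero S ∧ ∀ f : S ⟶ S, f = 0 ∨ IsIso f

/-- A simple object of the full abelian subcategory determined by a wide subcategory `W`. -/
def IsSimpleIn (W : Set C) (S : C) : Prop :=
  S ∈ W ∧ ¬ IsZero S ∧ ∀ ⦃A : C⦄ (f : A ⟶ S), A ∈ W → Mono f → IsZero A ∨ IsIso f

/-- A Hasse arrow `T → U` in the poset of torsion classes: `U ⊊ T` are adjacent. -/
def IsHasseArrow (T U : Set C) : Prop :=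
  IsTorsionClass C T ∧ IsTorsionClass C U ∧ U ⊂ T ∧
    ∀ V : Set C, IsTorsionClass C V → U ⊆ V → V ⊆ T → V = U ∨ V = T

/-- A Hasse arrow `F → G` in the poset of torsion-free classes: `G ⊊ F` are adjacent. -/
def IsHasseArrowTorf (F G : Set C) : Prop :=
  IsTorsionFreeClass C F ∧ IsTorsionFreeClass C G ∧ G ⊂ F ∧
    ∀ H : Set C, IsTorsionFreeClass C H → G ⊆ H → H ⊆ F → H = G ∨ H = F

/-- The brick label of a Hasse arrow `T → U` of torsion classes:
the unique brick in `U^⊥ ∩ T`. -/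
def IsBrickLabel (T U : Set C) (S : C) : Prop := IsBrick C S ∧ S ∈ RPerp C U ∩ T

/-- The brick label of a Hasse arrow `F → G` of torsion-free classes:
the unique brick in `^⊥G ∩ F`. -/
def IsBrickLabelTorf (F G : Set C) (S : C) : Prop := IsBrick C S ∧ S ∈ LPerp C G ∩ F

/-- The left wide subcategory of a torsion class. -/
def WL (T : Set C) : Set C :=
  {X | X ∈ T ∧ ∀ ⦃Y : C⦄ (g : Y ⟶ X), Y ∈ T → kernel g ∈ T}

/-- The right wide subcategory of a torsion-free class. -/
def WR (F : Set C) : Set C :=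
  {X | X ∈ F ∧ ∀ ⦃Y : C⦄ (f : X ⟶ Y), Y ∈ F → cokernel f ∈ F}

/-- A Serre subcategory of the abelian category given by a wide subcategory `W`:
closed under extensions, subobjects and quotients within `W`. -/
structure IsSerreIn (W S : Set C) : Prop where
  subset : S ⊆ W
  zero_mem : ∀ Z : C, IsZero Z → Z ∈ S
  sub_mem : ∀ ⦃A X : C⦄ (f : A ⟶ X), Mono f → A ∈ W → X ∈ S → A ∈ S
  quot_mem : ∀ ⦃X B : C⦄ (f : X ⟶ B), Epi f → B ∈ W → X ∈ S → B ∈ S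
  ext_mem : ∀ E : ShortComplex C, E.ShortExact → E.X₂ ∈ W →
    E.X₁ ∈ S → E.X₃ ∈ S → E.X₂ ∈ S

/-- A torsion class of the abelian category given by a wide subcategory `W`:
a subclass of `W` containing the zero objects and closed under quotients in `W`
and extensions. -/
structure IsTorsionClassIn (W X : Set C) : Prop where
  subset : X ⊆ W
  zero_mem : ∀ Z : C, IsZero Z → Z ∈ X
  quot_mem : ∀ ⦃A B : C⦄ (f : A ⟶ B), Epi f → A ∈ X → B ∈ W → B ∈ X
  ext_mem : ∀ E : ShortComplex C, E.ShortExact → E.X₁ ∈ X → E.X₃ ∈ X → E.X₂ ∈ X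
section Aux
variable {C}

lemma torsion_iso_mem {U : Set C} (hU : IsTorsionClass C U) {X Y : C} (e : X ≅ Y)
    (h : X ∈ U) : Y ∈ U := hU.quot_mem e.hom inferInstance h

lemma exists_torsion_subobject [Noetherian C] {U : Set C} (hU : IsTorsionClass C U) (X : C) :
    ∃ M : Subobject X, ((M : C) ∈ U ∧ cokernel M.arrow ∈ RPerp C U) := by
  obtain ⟨M, hMU, hmax⟩ := (wellFounded_gt (α := Subobject X)).has_min
    {A : Subobject X | (A : C) ∈ U}
    ⟨⊥, hU.zero_mem _ (IsZero.of_iso (isZero_zero C) Subobject.botCoeIsoZero)⟩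
  refine ⟨M, hMU, ?_⟩
  intro B hB f
  rw [← Abelian.image.fac f]
  suffices hι : Abelian.image.ι f = 0 by rw [hι, comp_zero]
  set π : X ⟶ cokernel M.arrow := cokernel.π M.arrow with hπ
  set ι : Abelian.image f ⟶ cokernel M.arrow := Abelian.image.ι f with hιdef
  set P := pullback π ι with hP
  set fst : P ⟶ X := pullback.fst π ι with hfst
  set snd : P ⟶ Abelian.image f := pullback.snd π ι with hsnd
  have hm0 : (0 : (M : C) ⟶ Abelian.image f) ≫ ι = M.arrow ≫ π := by
    simp [hπ, cokernel.condition]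
  set m : (M : C) ⟶ P := pullback.lift M.arrow 0 hm0.symm with hm
  have hmfst : m ≫ fst = M.arrow := pullback.lift_fst _ _ _
  have hmsnd : m ≫ snd = 0 := pullback.lift_snd _ _ _
  haveI : Mono m := by
    have : Mono (m ≫ fst) := by rw [hmfst]; infer_instance
    exact mono_of_mono m fst
  -- m is a kernel of snd
  have hker : IsLimit (KernelFork.ofι m hmsnd) := by
    refine KernelFork.IsLimit.ofι' m hmsnd (fun {A} k hk => ?_)
    have hk0 : (k ≫ fst) ≫ π = 0 := by
      rw [Category.assoc, pullback.condition, ← Category.assoc, hk, zero_comp]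
    refine ⟨Abelian.monoLift M.arrow (k ≫ fst) hk0, ?_⟩
    apply pullback.hom_ext
    · rw [Category.assoc, hmfst, Abelian.monoLift_comp]
    · rw [Category.assoc, hmsnd, comp_zero, hk]
  have hexact : (ShortComplex.mk m snd hmsnd).ShortExact :=
    { exact := (ShortComplex.mk m snd hmsnd).exact_of_f_is_kernel hker
      mono_f := ‹Mono m›
      epi_g := Abelian.epi_pullback_of_epi_f π ι }
  have hPU : P ∈ U := hU.ext_mem _ hexact hMU
    (hU.quot_mem (Abelian.factorThruImage f) inferInstance hB)
  have hNU : Subobject.mk fst ∈ {A : Subobject X | (A : C) ∈ U} :=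
    torsion_iso_mem hU (Subobject.underlyingIso fst).symm hPU
  have hMN : M ≤ Subobject.mk fst := Subobject.le_mk_of_comm m hmfst
  have hle : Subobject.mk fst ≤ M := by
    by_contra h
    exact hmax _ hNU (lt_of_le_not_ge hMN h)
  have hw : Subobject.ofMkLE fst M hle ≫ M.arrow = fst := Subobject.ofMkLE_arrow hle
  have : snd ≫ ι = 0 := by
    rw [← pullback.condition, ← hfst, ← hw, Category.assoc]
    simp [hπ, cokernel.condition]
  exact (cancel_epi snd).1 (by rw [this, comp_zero])

end Aux

/-- Lemma: for torsion classes `U ⊆ T` and `W = U^⊥ ∩ T`, every `T`-object is an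
extension of a `W`-object by a `U`-object, uniquely up to isomorphism; thus `T = U * W`. -/
theorem stmt_0 [Noetherian C] [Artinian C]
    (U T : Set C) (hU : IsTorsionClass C U) (hT : IsTorsionClass C T) (hUT : U ⊆ T)
    (W : Set C) (hW : W = RPerp C U ∩ T) :
    (∀ X ∈ T, ∃ (A : C) (i : A ⟶ X), Mono i ∧ A ∈ U ∧ cokernel i ∈ W) ∧
    (∀ X ∈ T, ∀ (A A' : C) (i : A ⟶ X) (i' : A' ⟶ X), Mono i → Mono i' →
      A ∈ U → A' ∈ U → cokernel i ∈ W → cokernel i' ∈ W →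
      ∃ e : A ≅ A', e.hom ≫ i' = i) ∧
    T = ExtStar C U W := by
  have key : ∀ X ∈ T, ∃ (A : C) (i : A ⟶ X), Mono i ∧ A ∈ U ∧ cokernel i ∈ W := by
    intro X hX
    obtain ⟨M, hMU, hperp⟩ := exists_torsion_subobject hU X
    exact ⟨M, M.arrow, inferInstance, hMU,
      hW ▸ ⟨hperp, hT.quot_mem (cokernel.π M.arrow) inferInstance hX⟩⟩
  refine ⟨key, ?_, ?_⟩
  · intro X hX A A' i i' hi hi' hA hA' hc hc'
    haveI := hi; haveI := hi'
    rw [hW] at hc hc'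
    have h1 : i ≫ cokernel.π i' = 0 := hc'.1 A hA _
    have h2 : i' ≫ cokernel.π i = 0 := hc.1 A' hA' _
    refine ⟨⟨Abelian.monoLift i' i h1, Abelian.monoLift i i' h2, ?_, ?_⟩,
      Abelian.monoLift_comp i' i h1⟩
    · rw [← cancel_mono i]
      simp
    · rw [← cancel_mono i']
      simp
  · ext X
    simp only [ExtStar, Set.mem_setOf_eq]
    constructor
    · intro hX
      obtain ⟨A, i, hi, hA, hc⟩ := key X hX
      haveI := hi
      exact ⟨ShortComplex.mk i (cokernel.π i) (cokernel.condition i),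
        { exact := ShortComplex.exact_of_g_is_cokernel _ (cokernelIsCokernel i) },
        hA, hc, ⟨Iso.refl X⟩⟩
    · rintro ⟨E, hE, h1, h3, ⟨e⟩⟩
      have h3T : E.X₃ ∈ T := (hW ▸ h3).2
      exact hT.quot_mem e.hom inferInstance (hT.ext_mem E hE (hUT h1) h3T)
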